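/- Let T ⊆ {k/N : k ∈ ℤ} be a set of points satisfying the separation condition |t_i − t_j| ≥ νσ for all distinct t_i, t_j ∈ T, for some ν, σ > 0. Then for every k ∈ ℤ, the sum over k_m ∈ T (where t_m = k_m/N) of 1/(1 + ((k − k_m)/(Nσ))²) is strictly less than 2(1 + π²/(6ν²)). -/

import Mathlib

open Real

private lemma basel_shift : ∑' m : ℕ, 1 / ((m : ℝ) + 1) ^ 2 = π ^ 2 / 6 := by
  have hsum := hasSum_zeta_two.summable
  have h0 := Summable.tsum_eq_zero_add (f := fun n : ℕ => (1 : ℝ) / (n : ℝ) ^ 2) hsum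
  rw [hasSum_zeta_two.tsum_eq] at h0
  push_cast at h0
  norm_num at h0
  simpa [one_div] using h0.symm

private lemma basel_shift_summable : Summable (fun m : ℕ => 1 / ((m : ℝ) + 1) ^ 2) := by
  have h : Summable (fun n : ℕ => 1 / (n : ℝ) ^ 2) :=
    Real.summable_one_div_nat_pow.2 one_lt_two
  have := (summable_nat_add_iff 1).2 h
  simpa using this

private lemma lorentz_term_le {ν : ℝ} (hν : 0 < ν) (m : ℕ) :
    1 / (1 + (((m : ℝ) + 1) * ν) ^ 2) ≤ (1 / ν ^ 2) * (1 / ((m : ℝ) + 1) ^ 2) := by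
  rw [one_div_mul_one_div]
  apply one_div_le_one_div_of_le (by positivity)
  nlinarith [sq_nonneg (((m : ℝ) + 1) * ν)]

private lemma lorentz_shift_summable {ν : ℝ} (hν : 0 < ν) :
    Summable (fun m : ℕ => 1 / (1 + (((m : ℝ) + 1) * ν) ^ 2)) := by
  apply Summable.of_nonneg_of_le (fun m => by positivity) (lorentz_term_le hν)
  exact basel_shift_summable.mul_left _

private lemma lorentz_summable {ν : ℝ} (hν : 0 < ν) :
    Summable (fun m : ℕ => 1 / (1 + ((m : ℝ) * ν) ^ 2)) := by
  apply (summable_nat_add_iff 1).1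
  have h := lorentz_shift_summable hν
  apply Summable.of_nonneg_of_le (fun m => by positivity) (fun m => ?_) h
  show 1 / (1 + (((m + 1 : ℕ) : ℝ) * ν) ^ 2) ≤ 1 / (1 + (((m : ℝ) + 1) * ν) ^ 2)
  push_cast
  exact le_rfl

private lemma lorentz_tsum_lt {ν : ℝ} (hν : 0 < ν) :
    (∑' m : ℕ, 1 / (1 + ((m : ℝ) * ν) ^ 2)) < 1 + π ^ 2 / (6 * ν ^ 2) := by
  have hs := lorentz_summable hν
  rw [Summable.tsum_eq_zero_add hs]
  have h0 : (1 : ℝ) / (1 + ((0 : ℕ) * ν : ℝ) ^ 2) = 1 := by norm_num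
  rw [h0]
  have hsh : (fun m : ℕ => 1 / (1 + (((m + 1 : ℕ) : ℝ) * ν) ^ 2))
      = fun m : ℕ => 1 / (1 + (((m : ℝ) + 1) * ν) ^ 2) := by
    funext m; push_cast; rfl
  rw [hsh]
  have hbs : Summable (fun m : ℕ => (1 / ν ^ 2) * (1 / ((m : ℝ) + 1) ^ 2)) :=
    basel_shift_summable.mul_left _
  have hlt : (∑' m : ℕ, 1 / (1 + (((m : ℝ) + 1) * ν) ^ 2))
      < ∑' m : ℕ, (1 / ν ^ 2) * (1 / ((m : ℝ) + 1) ^ 2) := by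
    apply Summable.tsum_lt_tsum (i := 0) (lorentz_term_le hν) ?_ (lorentz_shift_summable hν) hbs
    show 1 / (1 + ((((0 : ℕ) : ℝ) + 1) * ν) ^ 2)
        < (1 / ν ^ 2) * (1 / (((0 : ℕ) : ℝ) + 1) ^ 2)
    have h1 : ((((0 : ℕ) : ℝ) + 1) * ν) ^ 2 = ν ^ 2 := by norm_num
    have h2 : (1 / ν ^ 2 : ℝ) * (1 / (((0 : ℕ) : ℝ) + 1) ^ 2) = 1 / ν ^ 2 := by norm_num
    rw [h1, h2]
    exact one_div_lt_one_div_of_lt (by positivity) (by nlinarith)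
  have heq : ∑' m : ℕ, (1 / ν ^ 2) * (1 / ((m : ℝ) + 1) ^ 2) = π ^ 2 / (6 * ν ^ 2) := by
    rw [tsum_mul_left, basel_shift]
    field_simp
  rw [heq] at hlt
  linarith

/-- One-sided bound: for a `νσ`-separated set `S` lying to the right of `c`,
the Lorentzian sum is bounded by the lattice Lorentzian sum, and is summable. -/
private lemma side_bound (c σ ν : ℝ) (hσ : 0 < σ) (hν : 0 < ν) (S : Set ℝ)
    (hsep : ∀ s ∈ S, ∀ t ∈ S, s ≠ t → ν * σ ≤ |s - t|)
    (hside : ∀ t ∈ S, c ≤ t) :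
    Summable (fun t : S => 1 / (1 + ((c - (t : ℝ)) / σ) ^ 2)) ∧
    (∑' t : S, 1 / (1 + ((c - (t : ℝ)) / σ) ^ 2))
      ≤ ∑' m : ℕ, 1 / (1 + ((m : ℝ) * ν) ^ 2) := by
  have hνσ : 0 < ν * σ := mul_pos hν hσ
  set φ : S → ℕ := fun t => ⌊((t : ℝ) - c) / (ν * σ)⌋₊ with hφ
  have hd : ∀ t : S, 0 ≤ ((t : ℝ) - c) / (ν * σ) := fun t =>
    div_nonneg (by linarith [hside t t.2]) hνσ.le
  have hφle : ∀ t : S, (φ t : ℝ) * (ν * σ) ≤ (t : ℝ) - c := by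
    intro t
    have h1 : (φ t : ℝ) ≤ ((t : ℝ) - c) / (ν * σ) := Nat.floor_le (hd t)
    calc (φ t : ℝ) * (ν * σ) ≤ (((t : ℝ) - c) / (ν * σ)) * (ν * σ) := by
          apply mul_le_mul_of_nonneg_right h1 hνσ.le
      _ = (t : ℝ) - c := by field_simp
  have hφlt : ∀ t : S, (t : ℝ) - c < ((φ t : ℝ) + 1) * (ν * σ) := by
    intro t
    have h1 : ((t : ℝ) - c) / (ν * σ) < (φ t : ℝ) + 1 := Nat.lt_floor_add_one _
    calc (t : ℝ) - c = (((t : ℝ) - c) / (ν * σ)) * (ν * σ) := by field_simp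
      _ < ((φ t : ℝ) + 1) * (ν * σ) := by
          apply mul_lt_mul_of_pos_right h1 hνσ
  have hinj : Function.Injective φ := by
    intro a b hab
    by_contra hne
    have hne' : (a : ℝ) ≠ (b : ℝ) := fun h => hne (Subtype.ext h)
    have hsep' := hsep a a.2 b b.2 hne'
    have h1 := hφle a
    have h2 := hφlt a
    have h3 := hφle b
    have h4 := hφlt b
    rw [hab] at h1 h2
    have habs : |(a : ℝ) - (b : ℝ)| < ν * σ := by
      rw [abs_sub_lt_iff]
      constructor <;> nlinarith
    linarith [habs, hsep']
  have hle : ∀ t : S, 1 / (1 + ((c - (t : ℝ)) / σ) ^ 2)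
      ≤ 1 / (1 + ((φ t : ℝ) * ν) ^ 2) := by
    intro t
    apply one_div_le_one_div_of_le (by positivity)
    have h1 : (φ t : ℝ) * ν ≤ ((t : ℝ) - c) / σ := by
      rw [le_div_iff₀ hσ]
      calc (φ t : ℝ) * ν * σ = (φ t : ℝ) * (ν * σ) := by ring
        _ ≤ (t : ℝ) - c := hφle t
    have h2 : ((φ t : ℝ) * ν) ^ 2 ≤ (((t : ℝ) - c) / σ) ^ 2 :=
      pow_le_pow_left₀ (by positivity) h1 2
    have h3 : ((c - (t : ℝ)) / σ) ^ 2 = (((t : ℝ) - c) / σ) ^ 2 := by ring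
    linarith [h2, h3.ge, h3.le]
  have hsummable : Summable (fun t : S => 1 / (1 + ((c - (t : ℝ)) / σ) ^ 2)) := by
    apply Summable.of_nonneg_of_le (fun t => by positivity) hle
    exact (lorentz_summable hν).comp_injective hinj
  refine ⟨hsummable, ?_⟩
  exact hsummable.tsum_le_tsum_of_inj φ hinj (fun n _ => by positivity) hle
    (lorentz_summable hν)

theorem stmt6 (N : ℕ) (hN : 0 < N) (σ ν : ℝ) (hσ : 0 < σ) (hν : 0 < ν)
    (T : Set ℝ) (hlat : T ⊆ {t : ℝ | ∃ k : ℤ, t = (k : ℝ) / N})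
    (hsep : ∀ s ∈ T, ∀ t ∈ T, s ≠ t → ν * σ ≤ |s - t|)
    (k : ℤ) :
    (∑' t : T, 1 / (1 + (((k : ℝ) / N - (t : ℝ)) / σ) ^ 2)) <
      2 * (1 + π ^ 2 / (6 * ν ^ 2)) := by
  set c : ℝ := (k : ℝ) / N with hc
  set Tp : Set ℝ := {t ∈ T | c ≤ t} with hTp
  set Tm : Set ℝ := {t ∈ T | t < c} with hTm
  have hunion : T = Tp ∪ Tm := by
    ext t
    simp only [hTp, hTm, Set.mem_union, Set.mem_setOf_eq]
    constructor
    · intro ht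
      rcases le_or_gt c t with h | h
      · exact Or.inl ⟨ht, h⟩
      · exact Or.inr ⟨ht, h⟩
    · rintro (⟨ht, _⟩ | ⟨ht, _⟩) <;> exact ht
  have hdisj : Disjoint Tp Tm := by
    rw [Set.disjoint_left]
    rintro t ⟨_, h1⟩ ⟨_, h2⟩
    linarith
  -- right side
  have hp := side_bound c σ ν hσ hν Tp
    (fun s hs t ht hst => hsep s hs.1 t ht.1 hst) (fun t ht => ht.2)
  -- left side, via reflection
  set r : ℝ → ℝ := fun x => 2 * c - x with hr
  have hrinj : Function.Injective r := by
    intro a b hab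
    simp only [hr] at hab
    linarith
  set S : Set ℝ := r '' Tm with hS
  have hm0 := side_bound c σ ν hσ hν S
    (by
      rintro s ⟨a, ha, rfl⟩ t ⟨b, hb, rfl⟩ hst
      have hab : a ≠ b := fun h => hst (by rw [h])
      have := hsep a ha.1 b hb.1 hab
      have heq : |r a - r b| = |a - b| := by
        simp only [hr]
        rw [show (2 * c - a) - (2 * c - b) = -(a - b) by ring, abs_neg]
      linarith [heq.ge, heq.le])
    (by
      rintro t ⟨a, ha, rfl⟩
      simp only [hr]
      linarith [ha.2])
  set e : Tm ≃ S := Equiv.Set.image r Tm hrinj with he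
  have hcomp : ∀ t : Tm, 1 / (1 + ((c - ((e t : ℝ))) / σ) ^ 2)
      = 1 / (1 + ((c - (t : ℝ)) / σ) ^ 2) := by
    intro t
    have : ((e t : ℝ)) = 2 * c - (t : ℝ) := rfl
    rw [this]
    congr 1
    ring_nf
  have hmsummable : Summable (fun t : Tm => 1 / (1 + ((c - (t : ℝ)) / σ) ^ 2)) := by
    have := (e.summable_iff
      (f := fun t : S => 1 / (1 + ((c - (t : ℝ)) / σ) ^ 2))).2 hm0.1
    have heq : (fun t : S => 1 / (1 + ((c - (t : ℝ)) / σ) ^ 2)) ∘ e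
        = fun t : Tm => 1 / (1 + ((c - (t : ℝ)) / σ) ^ 2) := by
      funext t
      exact hcomp t
    rwa [heq] at this
  have hmsum : (∑' t : Tm, 1 / (1 + ((c - (t : ℝ)) / σ) ^ 2))
      ≤ ∑' m : ℕ, 1 / (1 + ((m : ℝ) * ν) ^ 2) := by
    have htr := e.tsum_eq (f := fun t : S => 1 / (1 + ((c - (t : ℝ)) / σ) ^ 2))
    have heq : (∑' t : Tm, 1 / (1 + ((c - ((e t : ℝ))) / σ) ^ 2))
        = ∑' t : Tm, 1 / (1 + ((c - (t : ℝ)) / σ) ^ 2) := by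
      exact tsum_congr hcomp
    rw [← heq, htr]
    exact hm0.2
  -- combine
  have hsplit : (∑' t : T, 1 / (1 + ((c - (t : ℝ)) / σ) ^ 2))
      = (∑' t : Tp, 1 / (1 + ((c - (t : ℝ)) / σ) ^ 2))
        + ∑' t : Tm, 1 / (1 + ((c - (t : ℝ)) / σ) ^ 2) := by
    rw [hunion]
    exact hp.1.tsum_union_disjoint (f := fun x : ℝ => 1 / (1 + ((c - x) / σ) ^ 2))
      hdisj hmsummable
  have hH := lorentz_tsum_lt hν
  calc (∑' t : T, 1 / (1 + ((c - (t : ℝ)) / σ) ^ 2))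
      = (∑' t : Tp, 1 / (1 + ((c - (t : ℝ)) / σ) ^ 2))
        + ∑' t : Tm, 1 / (1 + ((c - (t : ℝ)) / σ) ^ 2) := hsplit
    _ ≤ (∑' m : ℕ, 1 / (1 + ((m : ℝ) * ν) ^ 2))
        + ∑' m : ℕ, 1 / (1 + ((m : ℝ) * ν) ^ 2) := add_le_add hp.2 hmsum
    _ < 2 * (1 + π ^ 2 / (6 * ν ^ 2)) := by linarith
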